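/- Let λ ∈ ℂ \ {0,1} and ζ with ζ² = 1 - λ. For the involution σ(x,z) = ((x - λz)/ζ, (x-z)/ζ), the functions p₂ = x - (1-ζ)z and p₃ = x(x - λz) are σ-invariant, and on the curve xz(x-z)(x-λz) = 1 they satisfy the relation p₃(p₂² - p₃) = -(1-ζ)², i.e., p₂² - p₃ = -(1-ζ)² z (x - z). -/
import Mathlib

/-- For ζ² = 1 - λ, ζ ≠ 0, the functions p₂ = x - (1-ζ)z and p₃ = x(x-λz) are
invariant under σ(x,z) = ((x-λz)/ζ, (x-z)/ζ); moreover
p₂² - p₃ = -(1-ζ)²·z·(x-z) identically, so that on the curve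
xz(x-z)(x-λz) = 1 one has p₃(p₂² - p₃) = -(1-ζ)². -/
theorem invariants_of_sigma
    (l ζ x z : ℂ) (h0 : l ≠ 0) (h1 : l ≠ 1)
    (hζ : ζ ^ 2 = 1 - l) (hζ0 : ζ ≠ 0) :
    ((x - l * z) / ζ - (1 - ζ) * ((x - z) / ζ) = x - (1 - ζ) * z) ∧
    ((x - l * z) / ζ * ((x - l * z) / ζ - l * ((x - z) / ζ)) = x * (x - l * z)) ∧
    ((x - (1 - ζ) * z) ^ 2 - x * (x - l * z) = -(1 - ζ) ^ 2 * z * (x - z)) ∧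
    (x * z * (x - z) * (x - l * z) = 1 →
      x * (x - l * z) * ((x - (1 - ζ) * z) ^ 2 - x * (x - l * z)) =
        -(1 - ζ) ^ 2) := by
  have hl : l = 1 - ζ ^ 2 := by linear_combination hζ
  subst hl
  refine ⟨?_, ?_, ?_, ?_⟩
  · field_simp; ring
  · field_simp; ring
  · ring
  · intro h; linear_combination (-(1 - ζ) ^ 2) * h
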